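/- Suppose u_h, v_h, q_h ∈ V_h^k satisfy, for every cell I_j and every polynomial test function φ of degree at most k on I_j, the two auxiliary equations of the dissipative Scheme D1: (v_h, φ)_{I_j} − ⟨q_h⁻, φ⟩_{I_j} + (q_h, φ′)_{I_j} = ⟨u_h⁻, φ⟩_{I_j} − (u_h, φ′)_{I_j} and (q_h, φ)_{I_j} = ⟨v_h⁺, φ⟩_{I_j} − (v_h, φ′)_{I_j}, with periodic trace identification. Then the energy identity ∫_a^b v_h² dx + ∫_a^b q_h² dx + ∫_a^b q_h u_h dx = 0 holds. -/

import Mathlib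

open Polynomial Set

noncomputable section

namespace FW

variable {N : ℕ}

/-- Minus trace `ω⁻` at interface `j+1/2` (right end of cell `j`). -/
def trM (x : Fin (N + 1) → ℝ) (ω : Fin N → Polynomial ℝ) (j : Fin N) : ℝ :=
  (ω j).eval (x j.succ)

/-- Plus trace `ω⁺` at interface `j+1/2` (left end of the next cell, cyclically). -/
def trP [NeZero N] (x : Fin (N + 1) → ℝ) (ω : Fin N → Polynomial ℝ) (j : Fin N) : ℝ :=
  (ω (j + 1)).eval (x (j + 1).castSucc)

/-- Average trace `{ω}`. -/
def trA [NeZero N] (x : Fin (N + 1) → ℝ) (ω : Fin N → Polynomial ℝ) (j : Fin N) : ℝ :=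
  (trP x ω j + trM x ω j) / 2

/-- Jump `[ω]`. -/
def jmp [NeZero N] (x : Fin (N + 1) → ℝ) (ω : Fin N → Polynomial ℝ) (j : Fin N) : ℝ :=
  trP x ω j - trM x ω j

/-- Cell L² pairing `(u, φ)_{I_j}` of a piecewise polynomial with a test polynomial. -/
def ipj (x : Fin (N + 1) → ℝ) (u : Fin N → Polynomial ℝ) (j : Fin N) (φ : Polynomial ℝ) : ℝ :=
  ∫ t in (x j.castSucc)..(x j.succ), (u j).eval t * φ.eval t

/-- Cell pairing `(f∘u, φ)_{I_j}`. -/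
def ipfj (x : Fin (N + 1) → ℝ) (f : ℝ → ℝ) (u : Fin N → Polynomial ℝ) (j : Fin N)
    (φ : Polynomial ℝ) : ℝ :=
  ∫ t in (x j.castSucc)..(x j.succ), f ((u j).eval t) * φ.eval t

/-- Boundary pairing `⟨g, φ⟩_{I_j}` for interface values `g`. -/
def bdj [NeZero N] (x : Fin (N + 1) → ℝ) (g : Fin N → ℝ) (j : Fin N) (φ : Polynomial ℝ) : ℝ :=
  g j * φ.eval (x j.succ) - g (j - 1) * φ.eval (x j.castSucc)

/-- Membership in the space `V_h^k` of piecewise polynomials of degree at most `k`. -/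
def memV (k : ℕ) (ω : Fin N → Polynomial ℝ) : Prop :=
  ∀ j, (ω j).degree ≤ (k : WithBot ℕ)

/-- `L⁻(ω, φ)`. -/
def Lm [NeZero N] (x : Fin (N + 1) → ℝ) (ω φ : Fin N → Polynomial ℝ) : ℝ :=
  ∑ j, (-(ipj x ω j (derivative (φ j))) + bdj x (trM x ω) j (φ j))

/-- `L⁺(ω, φ)`. -/
def Lp [NeZero N] (x : Fin (N + 1) → ℝ) (ω φ : Fin N → Polynomial ℝ) : ℝ :=
  ∑ j, (-(ipj x ω j (derivative (φ j))) + bdj x (trP x ω) j (φ j))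

/-- `L^c(ω, φ)`. -/
def Lc [NeZero N] (x : Fin (N + 1) → ℝ) (ω φ : Fin N → Polynomial ℝ) : ℝ :=
  ∑ j, (-(ipj x ω j (derivative (φ j))) + bdj x (trA x ω) j (φ j))

/-- Godunov numerical flux. -/
def godunov (f : ℝ → ℝ) (c d : ℝ) : ℝ :=
  if c < d then sInf (f '' Set.Icc c d) else sSup (f '' Set.Icc d c)

/-- Conservative numerical flux for `f(u) = u^p/p`, `F(u) = u^(p+1)/(p(p+1))`. -/
def consFlux (p : ℕ) (c d : ℝ) : ℝ :=
  if c = d then c ^ p / (p : ℝ)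
  else (d ^ (p + 1) / ((p : ℝ) * ((p : ℝ) + 1)) - c ^ (p + 1) / ((p : ℝ) * ((p : ℝ) + 1))) / (d - c)

/-- Dissipative (Godunov-flux) nonlinear form `N^d`. -/
def Nd [NeZero N] (x : Fin (N + 1) → ℝ) (f : ℝ → ℝ) (ω φ : Fin N → Polynomial ℝ) : ℝ :=
  ∑ j, (-(ipfj x f ω j (derivative (φ j)))
    + bdj x (fun i => godunov f (trM x ω i) (trP x ω i)) j (φ j))

/-- Conservative-flux nonlinear form `N^c`. -/
def Nc [NeZero N] (x : Fin (N + 1) → ℝ) (p : ℕ) (ω φ : Fin N → Polynomial ℝ) : ℝ :=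
  ∑ j, (-(ipfj x (fun w => w ^ p / (p : ℝ)) ω j (derivative (φ j)))
    + bdj x (fun i => consFlux p (trM x ω i) (trP x ω i)) j (φ j))

end FW


section Aux

open Polynomial MeasureTheory

private lemma ibp_poly (P Q : Polynomial ℝ) (α β : ℝ) :
    (∫ t in α..β, P.eval t * (derivative Q).eval t)
      + (∫ t in α..β, Q.eval t * (derivative P).eval t)
    = (P * Q).eval β - (P * Q).eval α := by
  have key : (∫ t in α..β, (derivative (P * Q)).eval t)
      = (P * Q).eval β - (P * Q).eval α := by
    apply intervalIntegral.integral_eq_sub_of_hasDerivAt (fun t _ => (P * Q).hasDerivAt t)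
    exact ((P * Q).derivative.continuous).intervalIntegrable _ _
  have expand : (∫ t in α..β, (derivative (P * Q)).eval t)
      = (∫ t in α..β, P.eval t * (derivative Q).eval t)
        + (∫ t in α..β, Q.eval t * (derivative P).eval t) := by
    rw [← intervalIntegral.integral_add (f := fun t => P.eval t * (derivative Q).eval t)
      (g := fun t => Q.eval t * (derivative P).eval t)
      ((P.continuous.mul (derivative Q).continuous).intervalIntegrable _ _)
      ((Q.continuous.mul (derivative P).continuous).intervalIntegrable _ _)]
    apply intervalIntegral.integral_congr
    intro t _
    simp only [derivative_mul, eval_add, eval_mul]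
    ring
  rw [← key]
  exact expand.symm

private lemma keyS {N : ℕ} [NeZero N] (x : Fin (N + 1) → ℝ) (ω v : Fin N → Polynomial ℝ) :
    ∑ j, (FW.bdj x (FW.trM x ω) j (v j) + FW.bdj x (FW.trP x v) j (ω j)
      - FW.ipj x ω j (derivative (v j)) - FW.ipj x v j (derivative (ω j))) = 0 := by
  have hterm : ∀ j : Fin N,
      FW.bdj x (FW.trM x ω) j (v j) + FW.bdj x (FW.trP x v) j (ω j)
        - FW.ipj x ω j (derivative (v j)) - FW.ipj x v j (derivative (ω j))
      = FW.trP x v j * FW.trM x ω j - FW.trP x v (j - 1) * FW.trM x ω (j - 1) := by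
    intro j
    have e1 : ((j - 1) + 1 : Fin N) = j := sub_add_cancel j 1
    have hvP : FW.trP x v (j - 1) = (v j).eval (x j.castSucc) := by
      simp [FW.trP, e1]
    have hwP : FW.trP x ω (j - 1) = (ω j).eval (x j.castSucc) := by
      simp [FW.trP, e1]
    have hsum : FW.ipj x ω j (derivative (v j)) + FW.ipj x v j (derivative (ω j))
        = FW.trM x ω j * FW.trM x v j - FW.trP x ω (j - 1) * FW.trP x v (j - 1) := by
      rw [hvP, hwP]
      simpa [FW.ipj, FW.trM, Polynomial.eval_mul] using
        ibp_poly (ω j) (v j) (x j.castSucc) (x j.succ)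
    simp only [FW.bdj]
    rw [show (v j).eval (x j.castSucc) = FW.trP x v (j - 1) from hvP.symm,
      show (ω j).eval (x j.castSucc) = FW.trP x ω (j - 1) from hwP.symm,
      show (v j).eval (x j.succ) = FW.trM x v j from rfl,
      show (ω j).eval (x j.succ) = FW.trM x ω j from rfl]
    linear_combination -hsum
  rw [Finset.sum_congr rfl (fun j _ => hterm j), Finset.sum_sub_distrib]
  have : ∑ j : Fin N, FW.trP x v (j - 1) * FW.trM x ω (j - 1)
      = ∑ j : Fin N, FW.trP x v j * FW.trM x ω j :=
    Fintype.sum_equiv (Equiv.subRight (1 : Fin N)) _ _ (fun j => rfl)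
  rw [this, sub_self]

end Aux

theorem stmt12 {N : ℕ} [NeZero N] (hN : 1 ≤ N) (a b : ℝ) (hab : a < b)
    (x : Fin (N + 1) → ℝ) (hx : StrictMono x) (hxa : x 0 = a) (hxb : x (Fin.last N) = b)
    (k : ℕ) (u v q : Fin N → Polynomial ℝ)
    (hu : FW.memV k u) (hv : FW.memV k v) (hq : FW.memV k q)
    (heq2 : ∀ (j : Fin N), ∀ φ : Polynomial ℝ, φ.degree ≤ (k : WithBot ℕ) →
      FW.ipj x v j φ - FW.bdj x (FW.trM x q) j φ + FW.ipj x q j (Polynomial.derivative φ)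
        = FW.bdj x (FW.trM x u) j φ - FW.ipj x u j (Polynomial.derivative φ))
    (heq3 : ∀ (j : Fin N), ∀ φ : Polynomial ℝ, φ.degree ≤ (k : WithBot ℕ) →
      FW.ipj x q j φ = FW.bdj x (FW.trP x v) j φ - FW.ipj x v j (Polynomial.derivative φ)) :
    (∑ j : Fin N, FW.ipj x v j (v j)) + (∑ j : Fin N, FW.ipj x q j (q j))
      + (∑ j : Fin N, FW.ipj x q j (u j)) = 0 := by
  have hterm : ∀ j : Fin N, FW.ipj x v j (v j) + FW.ipj x q j (q j) + FW.ipj x q j (u j)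
      = (FW.bdj x (FW.trM x q) j (v j) + FW.bdj x (FW.trP x v) j (q j)
          - FW.ipj x q j (Polynomial.derivative (v j)) - FW.ipj x v j (Polynomial.derivative (q j)))
        + (FW.bdj x (FW.trM x u) j (v j) + FW.bdj x (FW.trP x v) j (u j)
          - FW.ipj x u j (Polynomial.derivative (v j)) - FW.ipj x v j (Polynomial.derivative (u j))) := by
    intro j
    have hA := heq2 j (v j) (hv j)
    have hB := heq3 j (q j) (hq j)
    have hC := heq3 j (u j) (hu j)
    linarith
  calc (∑ j : Fin N, FW.ipj x v j (v j)) + (∑ j : Fin N, FW.ipj x q j (q j))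
      + (∑ j : Fin N, FW.ipj x q j (u j))
      = ∑ j : Fin N, (FW.ipj x v j (v j) + FW.ipj x q j (q j) + FW.ipj x q j (u j)) := by
        rw [Finset.sum_add_distrib, Finset.sum_add_distrib]
    _ = (∑ j : Fin N, (FW.bdj x (FW.trM x q) j (v j) + FW.bdj x (FW.trP x v) j (q j)
          - FW.ipj x q j (Polynomial.derivative (v j)) - FW.ipj x v j (Polynomial.derivative (q j))))
        + (∑ j : Fin N, (FW.bdj x (FW.trM x u) j (v j) + FW.bdj x (FW.trP x v) j (u j)
          - FW.ipj x u j (Polynomial.derivative (v j)) - FW.ipj x v j (Polynomial.derivative (u j)))) := by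
        rw [Finset.sum_congr rfl (fun j _ => hterm j), Finset.sum_add_distrib]
    _ = 0 := by rw [keyS x q v, keyS x u v, add_zero]
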